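/- Let 1 ≤ p < ∞, let (X_n) be a sequence of nonzero Banach spaces, and let X = (⊕_{n∈ℕ} X_n)_{ℓ_p}. Then B(X) contains a complemented subspace which is isometrically isomorphic to (⊕_{n∈ℕ} X_n)_{ℓ∞}: there exist a linear isometry Δ : (⊕_{n∈ℕ} X_n)_{ℓ∞} → B(X) and a bounded linear map Θ : B(X) → (⊕_{n∈ℕ} X_n)_{ℓ∞} with Θ ∘ Δ = id. -/

import Mathlib

set_option synthInstance.maxHeartbeats 1000000
set_option maxHeartbeats 1000000

open scoped ENNReal

/-- Let `1 ≤ p < ∞`, let `(X_n)` be a sequence of nonzero Banach spaces and let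
`X = (⊕_{n∈ℕ} X_n)_{ℓ_p}`.  Then `B(X)` contains a complemented subspace isometrically
isomorphic to `(⊕_{n∈ℕ} X_n)_{ℓ∞}`: there is a linear isometry
`Δ : (⊕ X_n)_{ℓ∞} → B(X)` and a bounded linear map `Θ : B(X) → (⊕ X_n)_{ℓ∞}`
with `Θ ∘ Δ = id`. -/
theorem stmt_6 (p : ℝ≥0∞) [Fact (1 ≤ p)] (hp : p < ⊤)
    (X : ℕ → Type*) [∀ n, NormedAddCommGroup (X n)] [∀ n, NormedSpace ℝ (X n)]
    [∀ n, CompleteSpace (X n)] (hX : ∀ n, ∃ x : X n, x ≠ 0) :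
    ∃ (Δ : (lp X ⊤) →L[ℝ] ((lp X p) →L[ℝ] (lp X p)))
      (Θ : ((lp X p) →L[ℝ] (lp X p)) →L[ℝ] (lp X ⊤)),
      (∀ y : lp X ⊤, ‖Δ y‖ = ‖y‖) ∧
      Θ.comp Δ = ContinuousLinearMap.id ℝ (lp X ⊤) := by
  classical
  have hp1 : (1 : ℝ≥0∞) ≤ p := Fact.out
  have hp0 : p ≠ 0 := by
    intro h; rw [h] at hp1; simp at hp1
  have hpt : 0 < p.toReal := ENNReal.toReal_pos hp0 hp.ne
  -- choose unit vectors
  have hv : ∀ n, ∃ v : X n, ‖v‖ = 1 := by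
    intro n
    obtain ⟨x, hx⟩ := hX n
    exact ⟨‖x‖⁻¹ • x, by
      rw [norm_smul, norm_inv, norm_norm, inv_mul_cancel₀ (norm_ne_zero_iff.2 hx)]⟩
  choose v hv1 using hv
  -- choose norming functionals
  have hf : ∀ n, ∃ f : X n →L[ℝ] ℝ, ‖f‖ = 1 ∧ f (v n) = 1 := by
    intro n
    have hvne : v n ≠ 0 := by
      intro h
      have h1 := hv1 n
      rw [h, norm_zero] at h1
      exact one_ne_zero h1.symm
    obtain ⟨g, hg1, hg2⟩ := exists_dual_vector ℝ (v n) (norm_ne_zero_iff.2 hvne)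
    exact ⟨g, hg1, by rw [hg2, hv1]; norm_num⟩
  choose f hf1 hf2 using hf
  -- pointwise bound
  have key : ∀ (y : lp X ⊤) (x : lp X p) (n : ℕ),
      ‖f n (x n) • y n‖ ≤ ‖y‖ * ‖x n‖ := by
    intro y x n
    rw [norm_smul]
    calc ‖f n (x n)‖ * ‖y n‖ ≤ (‖f n‖ * ‖x n‖) * ‖y‖ :=
          mul_le_mul ((f n).le_opNorm (x n))
            (lp.norm_apply_le_norm ENNReal.top_ne_zero y n) (norm_nonneg _)
            (by positivity)
      _ = ‖y‖ * ‖x n‖ := by rw [hf1]; ring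
  have sum_key : ∀ (y : lp X ⊤) (x : lp X p) (s : Finset ℕ),
      ∑ n ∈ s, ‖f n (x n) • y n‖ ^ p.toReal ≤ (‖y‖ * ‖x‖) ^ p.toReal := by
    intro y x s
    calc ∑ n ∈ s, ‖f n (x n) • y n‖ ^ p.toReal
        ≤ ∑ n ∈ s, (‖y‖ * ‖x n‖) ^ p.toReal := by
          refine Finset.sum_le_sum fun n _ => ?_
          exact Real.rpow_le_rpow (norm_nonneg _) (key y x n) hpt.le
      _ = ‖y‖ ^ p.toReal * ∑ n ∈ s, ‖x n‖ ^ p.toReal := by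
          rw [Finset.mul_sum]
          refine Finset.sum_congr rfl fun n _ => ?_
          rw [Real.mul_rpow (norm_nonneg _) (norm_nonneg _)]
      _ ≤ ‖y‖ ^ p.toReal * ‖x‖ ^ p.toReal := by
          refine mul_le_mul_of_nonneg_left (lp.sum_rpow_le_norm_rpow hpt x s) ?_
          positivity
      _ = (‖y‖ * ‖x‖) ^ p.toReal := by
          rw [Real.mul_rpow (norm_nonneg _) (norm_nonneg _)]
  -- membership
  have memD : ∀ (y : lp X ⊤) (x : lp X p), Memℓp (fun n => f n (x n) • y n) p :=
    fun y x => memℓp_gen' (sum_key y x)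
  -- the diagonal operator as a linear map for fixed y
  have normD : ∀ (y : lp X ⊤) (x : lp X p),
      ‖(⟨fun n => f n (x n) • y n, memD y x⟩ : lp X p)‖ ≤ ‖y‖ * ‖x‖ := by
    intro y x
    exact lp.norm_le_of_forall_sum_le hpt (by positivity) (sum_key y x)
  let T : lp X ⊤ → (lp X p →L[ℝ] lp X p) := fun y =>
    LinearMap.mkContinuous
      { toFun := fun x => (⟨fun n => f n (x n) • y n, memD y x⟩ : lp X p)
        map_add' := fun x x' => by
          apply lp.ext; funext n
          simp [lp.coeFn_add, Pi.add_apply, add_smul]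
          rfl
        map_smul' := fun c x => by
          apply lp.ext; funext n
          simp [lp.coeFn_smul, Pi.smul_apply, smul_smul] }
      ‖y‖ (fun x => normD y x)
  have T_apply : ∀ (y : lp X ⊤) (x : lp X p) (n : ℕ),
      (T y x) n = f n (x n) • y n := fun y x n => rfl
  have T_norm_le : ∀ y, ‖T y‖ ≤ ‖y‖ := fun y =>
    LinearMap.mkContinuous_norm_le _ (norm_nonneg y) _
  -- Δ as a continuous linear map
  let Δ : (lp X ⊤) →L[ℝ] ((lp X p) →L[ℝ] (lp X p)) :=
    LinearMap.mkContinuous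
      { toFun := T
        map_add' := fun y y' => by
          apply ContinuousLinearMap.ext; intro x
          apply lp.ext; funext n
          simp only [ContinuousLinearMap.add_apply, lp.coeFn_add, Pi.add_apply,
            T_apply, smul_add]
        map_smul' := fun c y => by
          apply ContinuousLinearMap.ext; intro x
          apply lp.ext; funext n
          simp only [RingHom.id_apply, ContinuousLinearMap.smul_apply, lp.coeFn_smul,
            Pi.smul_apply, T_apply]
          rw [smul_comm] }
      1 (fun y => by simpa using T_norm_le y)
  have Δ_apply : ∀ y, Δ y = T y := fun y => rfl
  -- norm of single
  have norm_single : ∀ n : ℕ, ‖lp.single p n (v n)‖ = 1 := by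
    intro n
    have := lp.norm_single (pos_iff_ne_zero.2 hp0) n (v n)
    rw [this, hv1]
  -- Θ
  have memΘ : ∀ (S : lp X p →L[ℝ] lp X p),
      Memℓp (fun n => (S (lp.single p n (v n))) n) ⊤ := by
    intro S
    apply memℓp_infty
    refine ⟨‖S‖, ?_⟩
    rintro - ⟨n, rfl⟩
    calc ‖(S (lp.single p n (v n))) n‖ ≤ ‖S (lp.single p n (v n))‖ :=
          lp.norm_apply_le_norm hp0 _ n
      _ ≤ ‖S‖ * ‖lp.single p n (v n)‖ := S.le_opNorm _
      _ = ‖S‖ := by rw [norm_single]; ring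
  have normΘ : ∀ (S : lp X p →L[ℝ] lp X p),
      ‖(⟨fun n => (S (lp.single p n (v n))) n, memΘ S⟩ : lp X ⊤)‖ ≤ ‖S‖ := by
    intro S
    refine lp.norm_le_of_forall_le (norm_nonneg S) fun n => ?_
    calc ‖(S (lp.single p n (v n))) n‖ ≤ ‖S (lp.single p n (v n))‖ :=
          lp.norm_apply_le_norm hp0 _ n
      _ ≤ ‖S‖ * ‖lp.single p n (v n)‖ := S.le_opNorm _
      _ = ‖S‖ := by rw [norm_single]; ring
  let Θ : ((lp X p) →L[ℝ] (lp X p)) →L[ℝ] (lp X ⊤) :=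
    LinearMap.mkContinuous
      { toFun := fun S => (⟨fun n => (S (lp.single p n (v n))) n, memΘ S⟩ : lp X ⊤)
        map_add' := fun S S' => by
          apply lp.ext; funext n
          simp [lp.coeFn_add, Pi.add_apply]
          rfl
        map_smul' := fun c S => by
          apply lp.ext; funext n
          simp [lp.coeFn_smul, Pi.smul_apply] }
      1 (fun S => by simpa using normΘ S)
  have Θ_apply : ∀ (S : lp X p →L[ℝ] lp X p) (n : ℕ),
      (Θ S) n = (S (lp.single p n (v n))) n := fun S n => rfl
  refine ⟨Δ, Θ, ?_, ?_⟩
  · -- isometry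
    intro y
    refine le_antisymm (T_norm_le y) ?_
    refine lp.norm_le_of_forall_le (norm_nonneg (Δ y)) fun n => ?_
    have h1 : (T y (lp.single p n (v n))) n = y n := by
      rw [T_apply, lp.single_apply_self, hf2, one_smul]
    calc ‖y n‖ = ‖(T y (lp.single p n (v n))) n‖ := by rw [h1]
      _ ≤ ‖T y (lp.single p n (v n))‖ := lp.norm_apply_le_norm hp0 _ n
      _ ≤ ‖T y‖ * ‖lp.single p n (v n)‖ := (T y).le_opNorm _
      _ = ‖Δ y‖ := by rw [norm_single, Δ_apply]; ring
  · -- retraction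
    apply ContinuousLinearMap.ext; intro y
    apply lp.ext; funext n
    rw [ContinuousLinearMap.comp_apply, Θ_apply, Δ_apply, T_apply,
      lp.single_apply_self, hf2, one_smul]
    rfl
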